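/- Let g and w be independent standard Gaussian random variables, let ρ ∈ [-1,1], q = √(1-ρ²), ĝ = ρg + qw, and let s₊, s₋ ∈ ℝ with shaped ReLU φ_s(x) = s₊·max(x,0) + s₋·min(x,0). Then E[ φ_s(g)·φ_s(ĝ) ] = ((s₊ + s₋)²/4)·ρ + ((s₊ − s₋)²/(2π))·( q + ρ·arcsin ρ ). -/

import Mathlib

open MeasureTheory ProbabilityTheory Real

section ShapedReluAux

open Set Filter

lemma shapedAux_phi_eq (sp sm u : ℝ) :
    sp * max u 0 + sm * min u 0 = ((sp + sm) / 2) * u + ((sp - sm) / 2) * |u| := by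
  rcases le_total 0 u with h | h
  · rw [max_eq_left h, min_eq_right h, abs_of_nonneg h]; ring
  · rw [max_eq_right h, min_eq_left h, abs_of_nonpos h]; ring

lemma shapedAux_hasDerivAt (α θ : ℝ) :
    HasDerivAt (fun t => Real.sin (2 * t - α) / 4 + t * (Real.cos α / 2))
      (Real.cos θ * Real.cos (θ - α)) θ := by
  have h1 : HasDerivAt (fun t : ℝ => 2 * t - α) 2 θ := by
    simpa using ((hasDerivAt_id θ).const_mul 2).sub_const α
  have h2 : HasDerivAt (fun t => Real.sin (2 * t - α)) (Real.cos (2 * θ - α) * 2) θ :=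
    (Real.hasDerivAt_sin _).comp θ h1
  have h3 := (h2.div_const 4).add ((hasDerivAt_id θ).mul_const (Real.cos α / 2))
  have e1 : Real.cos (2 * θ - α)
      = Real.cos θ * Real.cos (θ - α) - Real.sin θ * Real.sin (θ - α) := by
    rw [show 2 * θ - α = θ + (θ - α) by ring, Real.cos_add]
  have e2 : Real.cos α = Real.cos θ * Real.cos (θ - α) + Real.sin θ * Real.sin (θ - α) := by
    rw [show α = θ - (θ - α) by ring, Real.cos_sub]
    rw [show θ - (θ - α) = α by ring]
  have e3 : Real.cos (2 * θ - α) * 2 / 4 + Real.cos α / 2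
      = Real.cos θ * Real.cos (θ - α) := by
    rw [e1, e2]; ring
  simpa only [id_eq, one_mul, e3, Pi.add_def] using h3

lemma shapedAux_intCC (α a b : ℝ) : ∫ θ in a..b, Real.cos θ * Real.cos (θ - α)
    = (Real.sin (2 * b - α) / 4 + b * (Real.cos α / 2))
      - (Real.sin (2 * a - α) / 4 + a * (Real.cos α / 2)) := by
  refine intervalIntegral.integral_eq_sub_of_hasDerivAt (fun θ _ => shapedAux_hasDerivAt α θ) ?_
  exact (Real.continuous_cos.mul (Real.continuous_cos.comp
    (continuous_id.sub continuous_const))).intervalIntegrable _ _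

lemma shapedAux_C2 (α : ℝ) : ∫ θ in (-π)..π,
    (Real.cos θ * |Real.cos (θ - α)| + |Real.cos θ| * Real.cos (θ - α)) = 0 := by
  set f : ℝ → ℝ := fun θ => Real.cos θ * |Real.cos (θ - α)| + |Real.cos θ| * Real.cos (θ - α)
    with hf
  have hcont : Continuous f := by fun_prop
  have hneg : ∀ θ, f (θ + π) = - f θ := by
    intro θ
    simp only [hf]
    rw [show θ + π - α = (θ - α) + π by ring, Real.cos_add_pi, Real.cos_add_pi]
    simp only [abs_neg]
    ring
  have hsplit : ∫ θ in (-π)..π, f θ = (∫ θ in (-π)..(0:ℝ), f θ) + ∫ θ in (0:ℝ)..π, f θ :=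
    (intervalIntegral.integral_add_adjacent_intervals
      (hcont.intervalIntegrable _ _) (hcont.intervalIntegrable _ _)).symm
  have hshift : ∫ θ in (0:ℝ)..π, f θ = ∫ θ in (-π)..(0:ℝ), f (θ + π) := by
    rw [intervalIntegral.integral_comp_add_right f π]
    norm_num
  have : ∫ θ in (-π)..(0:ℝ), f (θ + π) = - ∫ θ in (-π)..(0:ℝ), f θ := by
    rw [← intervalIntegral.integral_neg]
    exact intervalIntegral.integral_congr fun θ _ => hneg θ
  rw [hsplit, hshift, this]
  ring

lemma shapedAux_C3 (α : ℝ) (h0 : 0 ≤ α) (hπ : α ≤ π) :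
    ∫ θ in (-π)..π, |Real.cos θ| * |Real.cos (θ - α)|
      = 2 * Real.sin α + (π - 2 * α) * Real.cos α := by
  have hπ2 : (0:ℝ) < π / 2 := by positivity
  set g : ℝ → ℝ := fun θ => |Real.cos θ| * |Real.cos (θ - α)| with hg
  have hcont : Continuous g := by fun_prop
  have hι : ∀ a b : ℝ, IntervalIntegrable g volume a b := fun a b =>
    hcont.intervalIntegrable a b
  have hper : ∀ θ, g (θ + π) = g θ := by
    intro θ
    simp only [hg]
    rw [show θ + π - α = (θ - α) + π by ring, Real.cos_add_pi, Real.cos_add_pi]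
    simp only [abs_neg]
  have hper' : ∀ θ, g (θ - π) = g θ := by
    intro θ; rw [← hper (θ - π)]; norm_num
  have s1 : (∫ θ in (-π)..(-(π/2)), g θ) + (∫ θ in (-(π/2))..π, g θ) = ∫ θ in (-π)..π, g θ :=
    intervalIntegral.integral_add_adjacent_intervals (hι _ _) (hι _ _)
  have s2 : (∫ θ in (-(π/2))..(π/2), g θ) + (∫ θ in (π/2)..π, g θ)
      = ∫ θ in (-(π/2))..π, g θ :=
    intervalIntegral.integral_add_adjacent_intervals (hι _ _) (hι _ _)
  have s3 : (∫ θ in (-(π/2))..(0:ℝ), g θ) + (∫ θ in (0:ℝ)..(π/2), g θ)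
      = ∫ θ in (-(π/2))..(π/2), g θ :=
    intervalIntegral.integral_add_adjacent_intervals (hι _ _) (hι _ _)
  have t1 : ∫ θ in (-π)..(-(π/2)), g θ = ∫ θ in (0:ℝ)..(π/2), g θ := by
    have h := intervalIntegral.integral_comp_sub_right g π (a := 0) (b := π/2)
    rw [zero_sub, show π/2 - π = -(π/2) by ring] at h
    rw [← h]
    exact intervalIntegral.integral_congr fun θ _ => hper' θ
  have t2 : ∫ θ in (π/2)..π, g θ = ∫ θ in (-(π/2))..(0:ℝ), g θ := by
    have h := intervalIntegral.integral_comp_add_right g π (a := -(π/2)) (b := 0)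
    rw [zero_add, show -(π/2) + π = π/2 by ring] at h
    rw [← h]
    exact intervalIntegral.integral_congr fun θ _ => hper θ
  have hdouble : ∫ θ in (-π)..π, g θ = 2 * ∫ θ in (-(π/2))..(π/2), g θ := by
    rw [← s1, ← s2, t1, t2, ← s3]; ring
  obtain ⟨c, hc⟩ : ∃ c : ℝ, c = α - π / 2 := ⟨_, rfl⟩
  have hcl : -(π/2) ≤ c := by rw [hc]; linarith
  have hcu : c ≤ π/2 := by rw [hc]; linarith
  have smid : (∫ θ in (-(π/2))..c, g θ) + (∫ θ in c..(π/2), g θ)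
      = ∫ θ in (-(π/2))..(π/2), g θ :=
    intervalIntegral.integral_add_adjacent_intervals (hι _ _) (hι _ _)
  have piece_hi : ∫ θ in c..(π/2), g θ = ∫ θ in c..(π/2), Real.cos θ * Real.cos (θ - α) := by
    refine intervalIntegral.integral_congr fun θ hθ => ?_
    rw [Set.uIcc_of_le hcu] at hθ
    obtain ⟨hθ1, hθ2⟩ := hθ
    have hx1 : 0 ≤ Real.cos θ :=
      Real.cos_nonneg_of_mem_Icc ⟨by linarith [hcl, hθ1], hθ2⟩
    have hx2 : 0 ≤ Real.cos (θ - α) :=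
      Real.cos_nonneg_of_mem_Icc ⟨by simp only [hc] at hθ1; linarith, by linarith⟩
    simp only [hg, abs_of_nonneg hx1, abs_of_nonneg hx2]
  have piece_lo : ∫ θ in (-(π/2))..c, g θ
      = - ∫ θ in (-(π/2))..c, Real.cos θ * Real.cos (θ - α) := by
    rw [← intervalIntegral.integral_neg]
    refine intervalIntegral.integral_congr fun θ hθ => ?_
    rw [Set.uIcc_of_le hcl] at hθ
    obtain ⟨hθ1, hθ2⟩ := hθ
    have hx1 : 0 ≤ Real.cos θ :=
      Real.cos_nonneg_of_mem_Icc ⟨hθ1, by linarith [hθ2, hcu]⟩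
    have hx2 : Real.cos (θ - α) ≤ 0 := by
      rw [show θ - α = -(α - θ) by ring, Real.cos_neg]
      refine Real.cos_nonpos_of_pi_div_two_le_of_le ?_ ?_
      · simp only [hc] at hθ2; linarith
      · linarith
    simp only [hg, abs_of_nonneg hx1, abs_of_nonpos hx2]
    ring
  have v1 : Real.sin (2 * (π/2) - α) = Real.sin α := by
    rw [show 2 * (π/2) - α = π - α by ring, Real.sin_pi_sub]
  have v2 : Real.sin (2 * c - α) = -Real.sin α := by
    rw [show 2 * c - α = α - π by rw [hc]; ring, Real.sin_sub]
    simp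
  have v3 : Real.sin (2 * (-(π/2)) - α) = Real.sin α := by
    rw [show 2 * (-(π/2)) - α = -(π + α) by ring, Real.sin_neg, Real.sin_add]
    simp
  rw [hdouble, ← smid, piece_hi, piece_lo, shapedAux_intCC, shapedAux_intCC, v1, v2, v3, hc]
  ring

lemma shapedAux_C1 (α : ℝ) :
    ∫ θ in (-π)..π, Real.cos θ * Real.cos (θ - α) = π * Real.cos α := by
  rw [shapedAux_intCC]
  have v1 : Real.sin (2 * π - α) = -Real.sin α := by
    rw [Real.sin_sub]; simp
  have v2 : Real.sin (2 * (-π) - α) = -Real.sin α := by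
    rw [show 2 * (-π) - α = -(2 * π + α) by ring, Real.sin_neg, Real.sin_add]; simp
  rw [v1, v2]
  ring

lemma shapedAux_angular (sp sm α : ℝ) (h0 : 0 ≤ α) (hπ : α ≤ π) :
    (∫ θ in (-π)..π, (sp * max (Real.cos θ) 0 + sm * min (Real.cos θ) 0) *
        (sp * max (Real.cos (θ - α)) 0 + sm * min (Real.cos (θ - α)) 0))
    = ((sp + sm) / 2) ^ 2 * (π * Real.cos α)
        + ((sp - sm) / 2) ^ 2 * (2 * Real.sin α + (π - 2 * α) * Real.cos α) := by
  have hpt : ∀ θ : ℝ, (sp * max (Real.cos θ) 0 + sm * min (Real.cos θ) 0) *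
        (sp * max (Real.cos (θ - α)) 0 + sm * min (Real.cos (θ - α)) 0)
      = ((sp + sm) / 2) ^ 2 * (Real.cos θ * Real.cos (θ - α))
        + ((sp + sm) / 2 * ((sp - sm) / 2)) *
            (Real.cos θ * |Real.cos (θ - α)| + |Real.cos θ| * Real.cos (θ - α))
        + ((sp - sm) / 2) ^ 2 * (|Real.cos θ| * |Real.cos (θ - α)|) := by
    intro θ
    rw [shapedAux_phi_eq, shapedAux_phi_eq]
    ring
  rw [intervalIntegral.integral_congr (g := fun θ =>
      ((sp + sm) / 2) ^ 2 * (Real.cos θ * Real.cos (θ - α))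
        + ((sp + sm) / 2 * ((sp - sm) / 2)) *
            (Real.cos θ * |Real.cos (θ - α)| + |Real.cos θ| * Real.cos (θ - α))
        + ((sp - sm) / 2) ^ 2 * (|Real.cos θ| * |Real.cos (θ - α)|))
      (fun θ _ => hpt θ)]
  have h1 : IntervalIntegrable (fun θ => Real.cos θ * Real.cos (θ - α)) volume (-π) π := by
    apply Continuous.intervalIntegrable; fun_prop
  have h2 : IntervalIntegrable
      (fun θ => Real.cos θ * |Real.cos (θ - α)| + |Real.cos θ| * Real.cos (θ - α))
      volume (-π) π := by
    apply Continuous.intervalIntegrable; fun_prop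
  have h3 : IntervalIntegrable (fun θ => |Real.cos θ| * |Real.cos (θ - α)|) volume (-π) π := by
    apply Continuous.intervalIntegrable; fun_prop
  rw [intervalIntegral.integral_add ((h1.const_mul _).add (h2.const_mul _)) (h3.const_mul _),
    intervalIntegral.integral_add (h1.const_mul _) (h2.const_mul _),
    intervalIntegral.integral_const_mul, intervalIntegral.integral_const_mul,
    intervalIntegral.integral_const_mul, shapedAux_C1, shapedAux_C2, shapedAux_C3 α h0 hπ]
  ring

lemma shapedAux_radial : ∫ r in Ioi (0:ℝ), r ^ 3 * Real.exp (-(r ^ 2) / 2) = 2 := by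
  have hderiv : ∀ r ∈ Ioi (0:ℝ),
      HasDerivAt (fun r : ℝ => -((r ^ 2 + 2) * Real.exp (-(r ^ 2) / 2)))
        (r ^ 3 * Real.exp (-(r ^ 2) / 2)) r := by
    intro r _
    have h1 : HasDerivAt (fun r : ℝ => -(r ^ 2) / 2) (-r) r := by
      have h := (hasDerivAt_pow 2 r).neg.div_const 2
      simp only [Pi.neg_def] at h
      exact h.congr_deriv (by norm_num; ring)
    have h2 : HasDerivAt (fun r : ℝ => Real.exp (-(r ^ 2) / 2))
        (Real.exp (-(r ^ 2) / 2) * (-r)) r := (Real.hasDerivAt_exp _).comp r h1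
    have h3 : HasDerivAt (fun r : ℝ => r ^ 2 + 2) (2 * r) r := by
      have h := (hasDerivAt_pow 2 r).add_const 2
      exact h.congr_deriv (by norm_num)
    have h4 := (h3.mul h2).neg
    have e : -(2 * r * Real.exp (-(r ^ 2) / 2) + (r ^ 2 + 2) * (Real.exp (-(r ^ 2) / 2) * (-r)))
        = r ^ 3 * Real.exp (-(r ^ 2) / 2) := by ring
    simpa only [e, Pi.neg_def, Pi.mul_def] using h4
  have hint : IntegrableOn (fun r : ℝ => r ^ 3 * Real.exp (-(r ^ 2) / 2)) (Ioi 0) := by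
    have := integrableOn_rpow_mul_exp_neg_mul_sq (by norm_num : (0:ℝ) < 1/2)
      (by norm_num : (-1:ℝ) < 3)
    refine this.congr_fun (fun x hx => ?_) measurableSet_Ioi
    dsimp only; rw [show (3:ℝ) = ((3:ℕ):ℝ) by norm_num, Real.rpow_natCast]
    ring_nf
  have htend : Tendsto (fun r : ℝ => -((r ^ 2 + 2) * Real.exp (-(r ^ 2) / 2))) atTop (nhds 0) := by
    have hsq : Tendsto (fun r : ℝ => r ^ 2 / 2) atTop atTop :=
      (tendsto_pow_atTop two_ne_zero).atTop_div_const (by norm_num)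
    have t1 : Tendsto (fun t : ℝ => t ^ 1 * Real.exp (-t)) atTop (nhds 0) :=
      tendsto_pow_mul_exp_neg_atTop_nhds_zero 1
    have t2 : Tendsto (fun t : ℝ => Real.exp (-t)) atTop (nhds 0) :=
      Real.tendsto_exp_neg_atTop_nhds_zero
    have c1 := (t1.comp hsq).const_mul (2:ℝ)
    have c2 := (t2.comp hsq).const_mul (2:ℝ)
    have h := (c1.add c2).neg
    simp only [mul_zero, add_zero, neg_zero] at h
    refine h.congr (fun r => ?_)
    simp only [Function.comp]
    rw [pow_one]
    have e : Real.exp (-(r ^ 2 / 2)) = Real.exp (-(r ^ 2) / 2) := by ring_nf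
    rw [e]; ring
  have := integral_Ioi_of_hasDerivAt_of_tendsto
    (by
      have h : ContinuousOn (fun r : ℝ => -((r ^ 2 + 2) * Real.exp (-(r ^ 2) / 2))) (Ici 0) := by
        fun_prop
      exact h.continuousWithinAt (by simp))
    hderiv hint htend
  rw [this]
  norm_num

lemma shapedAux_prod_eq :
    (gaussianReal 0 1).prod (gaussianReal 0 1)
      = (volume : Measure (ℝ × ℝ)).withDensity
          (fun p => gaussianPDF 0 1 p.1 * gaussianPDF 0 1 p.2) := by
  refine (Measure.prod_eq fun s t hs ht => ?_)
  rw [withDensity_apply _ (hs.prod ht), Measure.volume_eq_prod, ← Measure.prod_restrict,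
    lintegral_prod_mul (measurable_gaussianPDF 0 1).aemeasurable
      (measurable_gaussianPDF 0 1).aemeasurable,
    gaussianReal_of_var_ne_zero 0 one_ne_zero, withDensity_apply _ hs, withDensity_apply _ ht]

lemma shapedAux_integral_eq (F : ℝ × ℝ → ℝ) :
    ∫ p, F p ∂((gaussianReal 0 1).prod (gaussianReal 0 1))
      = ∫ p : ℝ × ℝ, (gaussianPDFReal 0 1 p.1 * gaussianPDFReal 0 1 p.2) * F p := by
  rw [shapedAux_prod_eq]
  have hm : Measurable fun p : ℝ × ℝ =>
      (gaussianPDFReal 0 1 p.1 * gaussianPDFReal 0 1 p.2).toNNReal :=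
    (((measurable_gaussianPDFReal 0 1).comp measurable_fst).mul
      ((measurable_gaussianPDFReal 0 1).comp measurable_snd)).real_toNNReal
  have heq : (fun p : ℝ × ℝ => gaussianPDF 0 1 p.1 * gaussianPDF 0 1 p.2)
      = fun p => ((gaussianPDFReal 0 1 p.1 * gaussianPDFReal 0 1 p.2).toNNReal : ENNReal) := by
    funext p
    rw [gaussianPDF, gaussianPDF, ← ENNReal.ofReal_mul (gaussianPDFReal_nonneg _ _ _)]
    rfl
  rw [heq, integral_withDensity_eq_integral_smul hm]
  refine integral_congr_ae (Filter.Eventually.of_forall fun p => ?_)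
  simp only [NNReal.smul_def, Real.coe_toNNReal _
    (mul_nonneg (gaussianPDFReal_nonneg _ _ _) (gaussianPDFReal_nonneg _ _ _)), smul_eq_mul]

lemma shapedAux_gpdf_mul (x y : ℝ) :
    gaussianPDFReal 0 1 x * gaussianPDFReal 0 1 y
      = (2 * π)⁻¹ * Real.exp (-(x ^ 2 + y ^ 2) / 2) := by
  simp only [gaussianPDFReal, NNReal.coe_one, mul_one, sub_zero]
  rw [show -(x ^ 2 + y ^ 2) / 2 = -x ^ 2 / 2 + -y ^ 2 / 2 by ring, Real.exp_add]
  have h : Real.sqrt (2 * π) * Real.sqrt (2 * π) = 2 * π :=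
    Real.mul_self_sqrt (by positivity)
  have h2 : (Real.sqrt (2 * π))⁻¹ * (Real.sqrt (2 * π))⁻¹ = (2 * π)⁻¹ := by
    rw [← mul_inv, h]
  rw [← h2]
  ring

end ShapedReluAux

/-- For independent standard Gaussians `g, w`, `ρ ∈ [-1,1]`,
`q = √(1-ρ²)`, `ĝ = ρg + qw`, and the shaped ReLU
`φ_s(x) = s₊ max(x,0) + s₋ min(x,0)` (here `sp = s₊`, `sm = s₋`),
`E[φ_s(g)φ_s(ĝ)] = ((s₊+s₋)²/4) ρ + ((s₊−s₋)²/(2π))(q + ρ arcsin ρ)`. -/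
theorem shaped_relu_kernel (ρ sp sm : ℝ) (hρ : ρ ∈ Set.Icc (-1 : ℝ) 1) :
    (∫ p : ℝ × ℝ,
        (sp * max p.1 0 + sm * min p.1 0) *
          (sp * max (ρ * p.1 + Real.sqrt (1 - ρ ^ 2) * p.2) 0 +
            sm * min (ρ * p.1 + Real.sqrt (1 - ρ ^ 2) * p.2) 0)
      ∂((gaussianReal 0 1).prod (gaussianReal 0 1)))
    = ((sp + sm) ^ 2 / 4) * ρ +
        ((sp - sm) ^ 2 / (2 * π)) * (Real.sqrt (1 - ρ ^ 2) + ρ * Real.arcsin ρ) := by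
  obtain ⟨hρ1, hρ2⟩ := hρ
  have hcos : Real.cos (Real.arccos ρ) = ρ := Real.cos_arccos hρ1 hρ2
  have hsin : Real.sin (Real.arccos ρ) = Real.sqrt (1 - ρ ^ 2) := by
    rw [Real.sin_arccos]
  have hα0 : 0 ≤ Real.arccos ρ := Real.arccos_nonneg ρ
  have hαπ : Real.arccos ρ ≤ π := Real.arccos_le_pi ρ
  rw [shapedAux_integral_eq]
  rw [← integral_comp_polarCoord_symm]
  have hpt : ∀ p ∈ polarCoord.target,
      p.1 • ((fun p : ℝ × ℝ =>
          (gaussianPDFReal 0 1 p.1 * gaussianPDFReal 0 1 p.2) *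
            ((sp * max p.1 0 + sm * min p.1 0) *
              (sp * max (ρ * p.1 + Real.sqrt (1 - ρ ^ 2) * p.2) 0 +
                sm * min (ρ * p.1 + Real.sqrt (1 - ρ ^ 2) * p.2) 0)))
          (polarCoord.symm p))
      = ((2 * π)⁻¹ * (p.1 ^ 3 * Real.exp (-(p.1 ^ 2) / 2))) *
          ((sp * max (Real.cos p.2) 0 + sm * min (Real.cos p.2) 0) *
            (sp * max (Real.cos (p.2 - Real.arccos ρ)) 0 +
              sm * min (Real.cos (p.2 - Real.arccos ρ)) 0)) := by
    rintro ⟨r, θ⟩ hp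
    rw [polarCoord_target] at hp
    have hr : 0 < r := hp.1
    simp only [polarCoord_symm_apply]
    rw [shapedAux_gpdf_mul]
    have hr2 : (r * Real.cos θ) ^ 2 + (r * Real.sin θ) ^ 2 = r ^ 2 := by
      have := Real.sin_sq_add_cos_sq θ
      nlinarith [this]
    rw [hr2]
    have hmax1 : max (r * Real.cos θ) 0 = r * max (Real.cos θ) 0 := by
      rw [mul_max_of_nonneg _ _ hr.le, mul_zero]
    have hmin1 : min (r * Real.cos θ) 0 = r * min (Real.cos θ) 0 := by
      rw [mul_min_of_nonneg _ _ hr.le, mul_zero]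
    have harg : ρ * (r * Real.cos θ) + Real.sqrt (1 - ρ ^ 2) * (r * Real.sin θ)
        = r * Real.cos (θ - Real.arccos ρ) := by
      rw [Real.cos_sub, hcos, hsin]
      ring
    rw [harg]
    have hmax2 : max (r * Real.cos (θ - Real.arccos ρ)) 0
        = r * max (Real.cos (θ - Real.arccos ρ)) 0 := by
      rw [mul_max_of_nonneg _ _ hr.le, mul_zero]
    have hmin2 : min (r * Real.cos (θ - Real.arccos ρ)) 0
        = r * min (Real.cos (θ - Real.arccos ρ)) 0 := by
      rw [mul_min_of_nonneg _ _ hr.le, mul_zero]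
    rw [hmax1, hmin1, hmax2, hmin2, smul_eq_mul]
    ring
  rw [setIntegral_congr_fun polarCoord.open_target.measurableSet hpt]
  rw [polarCoord_target, Measure.volume_eq_prod,
    setIntegral_prod_mul (μ := (volume : Measure ℝ)) (ν := (volume : Measure ℝ))
      (f := fun r : ℝ => (2 * π)⁻¹ * (r ^ 3 * Real.exp (-(r ^ 2) / 2)))
      (g := fun θ : ℝ => (sp * max (Real.cos θ) 0 + sm * min (Real.cos θ) 0) *
        (sp * max (Real.cos (θ - Real.arccos ρ)) 0 +
          sm * min (Real.cos (θ - Real.arccos ρ)) 0))]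
  rw [integral_const_mul, shapedAux_radial]
  have hIoo : ∫ θ in Set.Ioo (-π) π,
      ((sp * max (Real.cos θ) 0 + sm * min (Real.cos θ) 0) *
        (sp * max (Real.cos (θ - Real.arccos ρ)) 0 +
          sm * min (Real.cos (θ - Real.arccos ρ)) 0))
      = ∫ θ in (-π)..π,
        ((sp * max (Real.cos θ) 0 + sm * min (Real.cos θ) 0) *
          (sp * max (Real.cos (θ - Real.arccos ρ)) 0 +
            sm * min (Real.cos (θ - Real.arccos ρ)) 0)) := by
    rw [intervalIntegral.integral_of_le (by linarith [Real.pi_pos]),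
      MeasureTheory.integral_Ioc_eq_integral_Ioo]
  rw [hIoo, shapedAux_angular sp sm _ hα0 hαπ, hcos, hsin]
  have harcsin : Real.arcsin ρ = π / 2 - Real.arccos ρ := by
    rw [Real.arccos]; ring
  rw [harcsin]
  have hπ0 : (π : ℝ) ≠ 0 := Real.pi_ne_zero
  field_simp
  ring
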